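/- arXiv:2602.06779 — 2 statements merged into one kernel-verified Lean document; each statement's English description precedes it below -/
import Mathlib

section
/- Let L⁰φ = φ'' + c(z)φ where c(z) = f_u(w⁰(z),v*) with c(z) → f_u(h^∓(v*), v*) < 0 exponentially as z → ±∞, and let w⁰_z ∈ Ker L⁰ be negative with exponential decay. For g in the Banach space X with ∫_ℝ g w⁰_z dz = 0, the function φ(z) = α w⁰_z(z) + w⁰_z(z)∫₀^z (w⁰_z(ξ))^{−2} ∫_{±∞}^{ξ} w⁰_z(η) g(η) dη dξ (variation of constants) solves L⁰φ = g, and its limits at ±∞ are φ_{±∞} = g_{±∞}/f_u(h^∓(v*), v*). -/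
open MeasureTheory Real
open Filter Set Topology


lemma lhopital_inf_atTop {f g f' g' : ℝ → ℝ} {a L : ℝ}
    (hf : ∀ z ∈ Ici a, HasDerivAt f (f' z) z)
    (hg : ∀ z ∈ Ici a, HasDerivAt g (g' z) z)
    (hg' : ∀ z ∈ Ici a, 0 < g' z)
    (hgtop : Tendsto g atTop atTop)
    (hlim : Tendsto (fun z => f' z / g' z) atTop (𝓝 L)) :
    Tendsto (fun z => f z / g z) atTop (𝓝 L) := by
  rw [Metric.tendsto_atTop] at hlim ⊢
  intro ε hε
  obtain ⟨A₀, hA₀⟩ := hlim (ε / 4) (by linarith)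
  set A := max a A₀ with hA
  have hAa : a ≤ A := le_max_left _ _
  -- slope bound
  have slope : ∀ z, A < z → |(f z - f A) / (g z - g A) - L| ≤ ε / 4 ∧ g A < g z := by
    intro z hz
    have hsub : ∀ x, x ∈ Icc A z → x ∈ Ici a := fun x hx => le_trans hAa hx.1
    have hsub' : ∀ x, x ∈ Ioo A z → x ∈ Ici a := fun x hx => le_trans hAa hx.1.le
    have hgc : ContinuousOn g (Icc A z) := fun x hx =>
      (hg x (hsub x hx)).continuousAt.continuousWithinAt
    have hfc : ContinuousOn f (Icc A z) := fun x hx =>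
      (hf x (hsub x hx)).continuousAt.continuousWithinAt
    have hgz : g A < g z := by
      obtain ⟨ξ, hξ, hs⟩ := exists_hasDerivAt_eq_slope g g' hz hgc
        (fun x hx => hg x (hsub' x hx))
      have := hg' ξ (hsub' ξ hξ)
      rw [hs] at this
      have := mul_pos this (sub_pos.2 hz)
      rw [div_mul_cancel₀] at this
      · linarith
      · exact sub_ne_zero.2 hz.ne'
    obtain ⟨ξ, hξ, hratio⟩ := exists_ratio_hasDerivAt_eq_ratio_slope f f' hz hfc
      (fun x hx => hf x (hsub' x hx)) g g' hgc (fun x hx => hg x (hsub' x hx))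
    have hgξ : 0 < g' ξ := hg' ξ (hsub' ξ hξ)
    have heq : (f z - f A) / (g z - g A) = f' ξ / g' ξ := by
      rw [div_eq_div_iff (by linarith) (by linarith)]
      linarith [hratio]
    rw [heq]
    refine ⟨?_, hgz⟩
    have := hA₀ ξ (le_trans (le_max_right a A₀) hξ.1.le)
    rw [Real.dist_eq] at this
    exact this.le
  -- eventually g z large
  have hM : ∀ᶠ z in atTop, max (4 * |f A - L * g A| / ε) (max 1 (4 * |g A| * (1 + |L| + ε))) < g z ∧ A < z :=
    (hgtop.eventually_gt_atTop _).and (eventually_gt_atTop A)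
  rw [eventually_atTop] at hM
  obtain ⟨N, hN⟩ := hM
  refine ⟨N, fun z hz => ?_⟩
  obtain ⟨hgz_big, hzA⟩ := hN z hz
  obtain ⟨hslope, hgA⟩ := slope z hzA
  have hg1 : (1:ℝ) < g z := lt_of_le_of_lt (le_trans (le_max_left _ _) (le_max_right _ _)) hgz_big
  have hgpos : 0 < g z := by linarith
  rw [Real.dist_eq]
  -- f z / g z - L = (f A - L * g A)/g z + ((f z - f A)/(g z - g A) - L) * (g z - g A)/g z
  have hne : g z - g A ≠ 0 := by linarith
  have key : f z / g z - L = (f A - L * g A) / g z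
      + ((f z - f A) / (g z - g A) - L) * ((g z - g A) / g z) := by
    field_simp
    ring
  rw [key]
  have h1 : |(f A - L * g A) / g z| ≤ ε / 4 := by
    rw [abs_div, abs_of_pos hgpos, div_le_iff₀ hgpos]
    have : 4 * |f A - L * g A| / ε < g z :=
      lt_of_le_of_lt (le_max_left _ _) hgz_big
    rw [div_lt_iff₀ hε] at this
    linarith
  have h2 : |((f z - f A) / (g z - g A) - L) * ((g z - g A) / g z)| ≤ ε / 4 * ((g z - g A)/ g z) := by
    rw [abs_mul]
    have hq : 0 < (g z - g A) / g z := div_pos (by linarith) hgpos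
    rw [abs_of_pos hq]
    exact mul_le_mul_of_nonneg_right hslope hq.le
  have habs : |g A| ≤ g z := by
    calc |g A| ≤ 4 * |g A| * (1 + |L| + ε) := by nlinarith [abs_nonneg (g A), abs_nonneg L]
    _ ≤ max (4 * |f A - L * g A| / ε) (max 1 (4 * |g A| * (1 + |L| + ε))) := le_trans (le_max_right _ _) (le_max_right _ _)
    _ ≤ g z := hgz_big.le
  have h3 : (g z - g A) / g z ≤ 2 := by
    rw [div_le_iff₀ hgpos]
    have : -(g A) ≤ |g A| := neg_le_abs _
    linarith
  calc |((f A - L * g A) / g z + ((f z - f A) / (g z - g A) - L) * ((g z - g A) / g z))|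
      ≤ |(f A - L * g A) / g z| + |((f z - f A) / (g z - g A) - L) * ((g z - g A) / g z)| := abs_add_le _ _
    _ ≤ ε / 4 + ε / 4 * ((g z - g A)/ g z) := by linarith
    _ ≤ ε / 4 + ε / 4 * 2 := by nlinarith
    _ < ε := by linarith

lemma aux_tendsto_top {c w w' w'' g J : ℝ → ℝ} {cp gp : ℝ} (hcp : cp < 0)
    (hc : Tendsto c atTop (𝓝 cp))
    (hwneg : ∀ z, w z < 0)
    (hw1 : ∀ z, HasDerivAt w (w' z) z)
    (hw2 : ∀ z, HasDerivAt w' (w'' z) z)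
    (hker : ∀ z, w'' z = -(c z * w z))
    (hw0 : Tendsto w atTop (𝓝 0)) (hw'0 : Tendsto w' atTop (𝓝 0))
    (hgp : Tendsto g atTop (𝓝 gp))
    (hJd : ∀ ξ, HasDerivAt J (w ξ * g ξ) ξ)
    (hJ0 : Tendsto J atTop (𝓝 0)) :
    Tendsto (fun z => w z * ∫ ξ in (0:ℝ)..z, (w ξ ^ 2)⁻¹ * J ξ) atTop (𝓝 (gp / cp)) := by
  have hwne : ∀ z, w z ≠ 0 := fun z => (hwneg z).ne
  -- A such that c < 0 on [A, ∞)
  obtain ⟨A, hA⟩ := eventually_atTop.mp (hc.eventually_lt_const hcp)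
  -- w'' < 0 on [A, ∞)
  have hw''neg : ∀ z, A ≤ z → w'' z < 0 := by
    intro z hz
    rw [hker z]
    have := mul_pos_of_neg_of_neg (hA z hz) (hwneg z)
    linarith
  -- w' strictly decreasing on [A, ∞)
  have hanti : StrictAntiOn w' (Ici A) := by
    apply strictAntiOn_of_deriv_neg (convex_Ici A)
      (fun x _ => (hw2 x).continuousAt.continuousWithinAt)
    intro x hx
    rw [interior_Ici] at hx
    rw [(hw2 x).deriv]
    exact hw''neg x hx.le
  -- w' > 0 on (A, ∞)
  have hw'pos : ∀ z, A < z → 0 < w' z := by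
    intro z hz
    by_contra hle
    push_neg at hle
    have ht : w' (z + 1) < 0 := lt_of_lt_of_le (hanti (Set.mem_Ici.mpr hz.le) (Set.mem_Ici.mpr (by linarith)) (by linarith)) hle
    obtain ⟨N, hN⟩ := eventually_atTop.mp (hw'0.eventually_const_lt ht)
    have hy : max N (z + 2) ≥ N := le_max_left _ _
    have h5 := hN _ hy
    have h6 := hanti (Set.mem_Ici.mpr (by linarith : A ≤ z + 1))
      (Set.mem_Ici.mpr (le_trans (by linarith : A ≤ z + 2) (le_max_right N (z+2))))
      (lt_of_lt_of_le (by linarith) (le_max_right N (z + 2)))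
    linarith
  -- L'Hopital 0/0 : J / w' → gp / (-cp)
  have hL1 : Tendsto (fun z => J z / w' z) atTop (𝓝 (gp / (-cp))) := by
    apply HasDerivAt.lhopital_zero_atTop (f' := fun z => w z * g z) (g' := w'')
      (Filter.Eventually.of_forall hJd) (Filter.Eventually.of_forall hw2)
      (eventually_atTop.mpr ⟨A, fun z hz => (hw''neg z hz).ne⟩) hJ0 hw'0
    have : Tendsto (fun z => g z / (-(c z))) atTop (𝓝 (gp / (-cp))) :=
      hgp.div (hc.neg) (by simpa using hcp.ne)
    apply this.congr'
    filter_upwards [Filter.eventually_ge_atTop A] with z hz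
    rw [hker z]
    have h2 := hwne z
    have h3 := (hA z hz).ne
    field_simp
  -- continuity of the integrand q
  have hwc : Continuous w := by
    rw [continuous_iff_continuousAt]; exact fun z => (hw1 z).continuousAt
  have hJc : Continuous J := by
    rw [continuous_iff_continuousAt]; exact fun z => (hJd z).continuousAt
  have hqc : Continuous (fun ξ => (w ξ ^ 2)⁻¹ * J ξ) :=
    (((hwc.pow 2).inv₀ (fun z => pow_ne_zero 2 (hwne z))).mul hJc)
  have hId : ∀ z, HasDerivAt (fun z => ∫ ξ in (0:ℝ)..z, (w ξ ^ 2)⁻¹ * J ξ)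
      ((w z ^ 2)⁻¹ * J z) z := fun z =>
    (hqc.integral_hasStrictDerivAt 0 z).hasDerivAt
  -- the ∞/∞ L'Hopital
  have hDtop : Tendsto (fun z => -(w z)⁻¹) atTop atTop := by
    have h1 : Tendsto (fun z => -(w z)) atTop (𝓝[>] 0) :=
      tendsto_nhdsWithin_of_tendsto_nhds_of_eventually_within _ (by simpa using hw0.neg)
        (Filter.Eventually.of_forall fun z => by
          simp only [Set.mem_Ioi, neg_pos]; exact hwneg z)
    have h2 := h1.inv_tendsto_nhdsGT_zero
    refine h2.congr fun z => ?_
    simp [inv_neg]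
  have main : Tendsto (fun z => (∫ ξ in (0:ℝ)..z, (w ξ ^ 2)⁻¹ * J ξ) / (-(w z)⁻¹))
      atTop (𝓝 (gp / (-cp))) := by
    apply lhopital_inf_atTop (a := A + 1)
      (f' := fun z => (w z ^ 2)⁻¹ * J z) (g' := fun z => w' z / w z ^ 2)
      (fun z _ => hId z)
    · intro z _
      have := ((hw1 z).inv (hwne z)).neg
      exact this.congr_deriv (by ring)
    · intro z hz
      exact div_pos (hw'pos z (by simp at hz; linarith)) (pow_two_pos_of_ne_zero (hwne z))
    · exact hDtop
    · apply hL1.congr'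
      filter_upwards [Filter.eventually_gt_atTop A] with z hz
      have h2 := hwne z
      have h3 := (hw'pos z hz).ne'
      field_simp
  -- conclude
  have : Tendsto (fun z => -((∫ ξ in (0:ℝ)..z, (w ξ ^ 2)⁻¹ * J ξ) / (-(w z)⁻¹)))
      atTop (𝓝 (-(gp / (-cp)))) := main.neg
  rw [show -(gp / (-cp)) = gp / cp by field_simp] at this
  apply this.congr
  intro z
  rw [div_neg, neg_neg, div_eq_mul_inv, inv_inv, mul_comm]

lemma aux_ode {c w g J φ : ℝ → ℝ} {α : ℝ}
    (hwne : ∀ z, w z ≠ 0)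
    (hw1 : ∀ z, HasDerivAt w (deriv w z) z)
    (hw2 : ∀ z, HasDerivAt (deriv w) (deriv (deriv w) z) z)
    (hg : Continuous g)
    (hJd : ∀ ξ, HasDerivAt J (w ξ * g ξ) ξ)
    (hker : ∀ z : ℝ, deriv (deriv w) z + c z * w z = 0)
    (hφdef : ∀ z, φ z = α * w z + w z * ∫ ξ in (0:ℝ)..z, (w ξ ^ 2)⁻¹ * J ξ) :
    ∀ z, deriv (deriv φ) z + c z * φ z = g z := by
  have hwc : Continuous w := by
    rw [continuous_iff_continuousAt]; exact fun z => (hw1 z).continuousAt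
  have hJc : Continuous J := by
    rw [continuous_iff_continuousAt]; exact fun z => (hJd z).continuousAt
  have hqc : Continuous (fun ξ => (w ξ ^ 2)⁻¹ * J ξ) :=
    ((hwc.pow 2).inv₀ fun z => pow_ne_zero 2 (hwne z)).mul hJc
  set I : ℝ → ℝ := fun z => ∫ ξ in (0:ℝ)..z, (w ξ ^ 2)⁻¹ * J ξ with hI
  have hId : ∀ z, HasDerivAt I ((w z ^ 2)⁻¹ * J z) z := fun z =>
    (hqc.integral_hasStrictDerivAt 0 z).hasDerivAt
  have hφeq : φ = fun z => α * w z + w z * I z := funext fun z => hφdef z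
  have hφ1 : ∀ z, HasDerivAt φ (α * deriv w z + (deriv w z * I z + w z * ((w z ^ 2)⁻¹ * J z))) z := by
    intro z
    rw [hφeq]
    exact ((hw1 z).const_mul α).add ((hw1 z).mul (hId z))
  have hdφ : deriv φ = fun z => α * deriv w z + (deriv w z * I z + w z * ((w z ^ 2)⁻¹ * J z)) :=
    funext fun z => (hφ1 z).deriv
  have hφ2 : ∀ z, HasDerivAt (deriv φ) ((α + I z) * deriv (deriv w) z + g z) z := by
    intro z
    rw [hdφ]
    have hbase : HasDerivAt (fun x => α * deriv w x + (deriv w x * I x + (w x)⁻¹ * J x))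
        (α * deriv (deriv w) z + ((deriv (deriv w) z * I z + deriv w z * ((w z ^ 2)⁻¹ * J z))
          + ((-(deriv w z) / w z ^ 2) * J z + (w z)⁻¹ * (w z * g z)))) z :=
      ((hw2 z).const_mul α).add (((hw2 z).mul (hId z)).add (((hw1 z).inv (hwne z)).mul (hJd z)))
    have hfun : (fun x => α * deriv w x + (deriv w x * I x + w x * ((w x ^ 2)⁻¹ * J x)))
        = fun x => α * deriv w x + (deriv w x * I x + (w x)⁻¹ * J x) := by
      funext x
      have hx := hwne x
      have : w x * ((w x ^ 2)⁻¹ * J x) = (w x)⁻¹ * J x := by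
        field_simp
      rw [this]
    rw [hfun]
    convert hbase using 1
    have hz := hwne z
    field_simp
    ring
  intro z
  have h1 : deriv (deriv φ) z = (α + I z) * deriv (deriv w) z + g z := (hφ2 z).deriv
  rw [h1, hφdef z]
  have h2 := hker z
  linear_combination (α + I z) * h2

lemma tendsto_of_exp_bound_atTop {f : ℝ → ℝ} {l C d : ℝ} (hd : 0 < d)
    (h : ∀ᶠ z in atTop, |f z - l| ≤ C * Real.exp (-d * |z|)) :
    Tendsto f atTop (𝓝 l) := by
  have h1 : Tendsto (fun z : ℝ => d * |z|) atTop atTop :=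
    tendsto_abs_atTop_atTop.const_mul_atTop hd
  have h2 : Tendsto (fun z : ℝ => C * Real.exp (-(d * |z|))) atTop (𝓝 (C * 0)) :=
    (Real.tendsto_exp_neg_atTop_nhds_zero.comp h1).const_mul C
  have h3 : Tendsto (fun z => f z - l) atTop (𝓝 0) := by
    apply squeeze_zero_norm' _ (by simpa using h2)
    simpa [neg_mul] using h
  simpa using h3.add_const l

lemma tendsto_of_exp_bound_atBot {f : ℝ → ℝ} {l C d : ℝ} (hd : 0 < d)
    (h : ∀ᶠ z in atBot, |f z - l| ≤ C * Real.exp (-d * |z|)) :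
    Tendsto f atBot (𝓝 l) := by
  have h1 : Tendsto (fun z : ℝ => d * |z|) atBot atTop :=
    tendsto_abs_atBot_atTop.const_mul_atTop hd
  have h2 : Tendsto (fun z : ℝ => C * Real.exp (-(d * |z|))) atBot (𝓝 (C * 0)) :=
    (Real.tendsto_exp_neg_atTop_nhds_zero.comp h1).const_mul C
  have h3 : Tendsto (fun z => f z - l) atBot (𝓝 0) := by
    apply squeeze_zero_norm' _ (by simpa using h2)
    simpa [neg_mul] using h
  simpa using h3.add_const l

lemma integrable_exp_neg_mul_abs {d : ℝ} (hd : 0 < d) :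
    MeasureTheory.Integrable (fun z : ℝ => Real.exp (-d * |z|)) := by
  have hIoi : MeasureTheory.IntegrableOn (fun z : ℝ => Real.exp (-d * |z|)) (Set.Ioi 0) := by
    apply (exp_neg_integrableOn_Ioi 0 hd).congr_fun _ measurableSet_Ioi
    intro x hx
    simp only []
    rw [abs_of_pos (Set.mem_Ioi.mp hx)]
  have hIic : MeasureTheory.IntegrableOn (fun z : ℝ => Real.exp (-d * |z|)) (Set.Iic 0) := by
    rw [← MeasureTheory.Measure.map_neg_eq_self (MeasureTheory.volume : MeasureTheory.Measure ℝ)]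
    have m : MeasurableEmbedding fun x : ℝ => -x := (Homeomorph.neg ℝ).measurableEmbedding
    rw [m.integrableOn_map_iff]
    simp_rw [Function.comp_def, abs_neg, neg_preimage, neg_Iic, neg_zero]
    exact Iff.mpr integrableOn_Ici_iff_integrableOn_Ioi hIoi
  rw [← MeasureTheory.integrableOn_univ, ← Set.Iic_union_Ioi (a := (0:ℝ))]
  exact hIic.union hIoi

/-- the variation-of-constants formula solves `L⁰φ = g` for `g ∈ X`
orthogonal to the kernel element `w⁰_z`, and the solution has limits
`φ_{±∞} = g_{±∞}/f_u(h^∓(v*), v*)` at `±∞`.  Here the potential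
`c(z) = f_u(w⁰(z), v*)` tends exponentially to the negative limits
`cp = f_u(h⁻(v*),v*)` at `+∞` and `cm = f_u(h⁺(v*),v*)` at `−∞`. -/
theorem variation_of_constants_solution
    (c : ℝ → ℝ) (hc : Continuous c)
    (cp cm : ℝ) (hcp : cp < 0) (hcm : cm < 0)
    (hclim : ∃ C d : ℝ, 0 < d ∧ ∀ z : ℝ,
      |c z - (if 0 ≤ z then cp else cm)| ≤ C * Real.exp (-d * |z|))
    (w0z : ℝ → ℝ) (hw0z : ContDiff ℝ 2 w0z) (hneg : ∀ z : ℝ, w0z z < 0)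
    (hker : ∀ z : ℝ, deriv (deriv w0z) z + c z * w0z z = 0)
    (hdecay : ∃ C d : ℝ, 0 < d ∧ ∀ z : ℝ,
      |w0z z| + |deriv w0z z| + |deriv (deriv w0z) z| ≤ C * Real.exp (-d * |z|))
    (g : ℝ → ℝ) (hg : Continuous g) (gp gm : ℝ)
    (hgX : ∃ C d : ℝ, 0 < d ∧ ∀ z : ℝ,
      |g z - (if 0 ≤ z then gp else gm)| ≤ C * Real.exp (-d * |z|))
    (horth : ∫ z : ℝ, g z * w0z z = 0)
    (α : ℝ) (φ : ℝ → ℝ)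
    (hφdef : ∀ z : ℝ, φ z = α * w0z z +
      w0z z * ∫ ξ in (0 : ℝ)..z, (w0z ξ ^ 2)⁻¹ * ∫ η in Set.Iic ξ, w0z η * g η) :
    (∀ z : ℝ, deriv (deriv φ) z + c z * φ z = g z) ∧
    Filter.Tendsto φ Filter.atTop (nhds (gp / cp)) ∧
    Filter.Tendsto φ Filter.atBot (nhds (gm / cm)) := by
  obtain ⟨Cg, dg, hdg, hCg⟩ := hgX
  obtain ⟨Cw, dw, hdw, hCw⟩ := hdecay
  obtain ⟨Cc, dc, hdc, hCc⟩ := hclim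
  have hwne : ∀ z, w0z z ≠ 0 := fun z => (hneg z).ne
  -- derivatives of w0z
  have hwdiff : Differentiable ℝ w0z := hw0z.differentiable two_ne_zero
  have hw'cd : ContDiff ℝ 1 (deriv w0z) := by
    have h2 : ContDiff ℝ ((1 : ℕ) + 1) w0z := by exact_mod_cast hw0z
    exact (contDiff_succ_iff_deriv.mp h2).2.2
  have hw'diff : Differentiable ℝ (deriv w0z) := hw'cd.differentiable one_ne_zero
  have hw1 : ∀ z, HasDerivAt w0z (deriv w0z z) z := fun z => (hwdiff z).hasDerivAt
  have hw2 : ∀ z, HasDerivAt (deriv w0z) (deriv (deriv w0z) z) z := fun z => (hw'diff z).hasDerivAt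
  -- bound on g
  have hCg0 : 0 ≤ Cg := by
    have h0 := (abs_nonneg (g 0 - if (0:ℝ) ≤ (0:ℝ) then gp else gm)).trans (hCg 0)
    simpa using h0
  have hgbd : ∀ z, |g z| ≤ max |gp| |gm| + Cg := by
    intro z
    have h1 := hCg z
    have h2 : Real.exp (-dg * |z|) ≤ 1 := by
      rw [← Real.exp_zero]
      apply Real.exp_le_exp.mpr
      have := abs_nonneg z
      nlinarith
    have h3 : |if 0 ≤ z then gp else gm| ≤ max |gp| |gm| := by
      split <;> [exact le_max_left _ _; exact le_max_right _ _]
    have h4 : Cg * Real.exp (-dg * |z|) ≤ Cg := by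
      nlinarith
    calc |g z| = |(g z - (if 0 ≤ z then gp else gm)) + (if 0 ≤ z then gp else gm)| := by ring_nf
      _ ≤ |g z - (if 0 ≤ z then gp else gm)| + |if 0 ≤ z then gp else gm| := abs_add_le _ _
      _ ≤ max |gp| |gm| + Cg := by linarith
  -- bounds on w0z and its derivatives
  have hwbd : ∀ z, |w0z z| ≤ Cw * Real.exp (-dw * |z|) := by
    intro z
    have := hCw z
    have := abs_nonneg (deriv w0z z)
    have := abs_nonneg (deriv (deriv w0z) z)
    linarith
  have hw'bd : ∀ z, |deriv w0z z| ≤ Cw * Real.exp (-dw * |z|) := by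
    intro z
    have := hCw z
    have := abs_nonneg (w0z z)
    have := abs_nonneg (deriv (deriv w0z) z)
    linarith
  -- integrability of w0z * g
  have hwg_cont : Continuous fun z => w0z z * g z := hwdiff.continuous.mul hg
  have hint : MeasureTheory.Integrable (fun z => w0z z * g z) := by
    apply MeasureTheory.Integrable.mono'
      ((integrable_exp_neg_mul_abs hdw).const_mul (Cw * (max |gp| |gm| + Cg)))
      hwg_cont.aestronglyMeasurable
    refine Filter.Eventually.of_forall fun z => ?_
    rw [Real.norm_eq_abs, abs_mul]
    have h1 := hwbd z
    have h2 := hgbd z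
    have h3 := abs_nonneg (w0z z)
    have h4 := abs_nonneg (g z)
    have h5 := Real.exp_pos (-dw * |z|)
    calc |w0z z| * |g z| ≤ (Cw * Real.exp (-dw * |z|)) * (max |gp| |gm| + Cg) :=
          mul_le_mul h1 h2 h4 (by nlinarith)
      _ = Cw * (max |gp| |gm| + Cg) * Real.exp (-dw * |z|) := by ring
  have hinttotal : ∫ z, w0z z * g z = 0 := by
    rw [← horth]
    simp_rw [mul_comm]
  -- J and its properties
  have hJeq : ∀ ξ : ℝ, (∫ η in Set.Iic ξ, w0z η * g η)
      = (∫ η in Set.Iic (0:ℝ), w0z η * g η) + ∫ η in (0:ℝ)..ξ, w0z η * g η := by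
    intro ξ
    rw [← intervalIntegral.integral_Iic_sub_Iic hint.integrableOn hint.integrableOn]
    ring
  have hJd : ∀ ξ : ℝ, HasDerivAt (fun ξ => ∫ η in Set.Iic ξ, w0z η * g η) (w0z ξ * g ξ) ξ := by
    intro ξ
    have h1 : HasDerivAt (fun ξ => (∫ η in Set.Iic (0:ℝ), w0z η * g η)
        + ∫ η in (0:ℝ)..ξ, w0z η * g η) (w0z ξ * g ξ) ξ :=
      ((hwg_cont.integral_hasStrictDerivAt 0 ξ).hasDerivAt).const_add _
    exact h1.congr_of_eventuallyEq (Filter.Eventually.of_forall hJeq)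
  have hJtop : Tendsto (fun ξ => ∫ η in Set.Iic ξ, w0z η * g η) atTop (𝓝 0) := by
    have h1 := (MeasureTheory.aecover_Iic (tendsto_id (α := ℝ))).integral_tendsto_of_countably_generated hint
    rwa [hinttotal] at h1
  have hJbot : Tendsto (fun ξ => ∫ η in Set.Iic ξ, w0z η * g η) atBot (𝓝 0) := by
    have h1 := (MeasureTheory.aecover_Ioi (tendsto_id (α := ℝ))).integral_tendsto_of_countably_generated hint
    have h3 : ∀ ξ : ℝ, (∫ η in Set.Iic ξ, w0z η * g η)
        = (∫ z, w0z z * g z) - ∫ z in Set.Ioi ξ, w0z z * g z := by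
      intro ξ
      rw [← intervalIntegral.integral_Iic_add_Ioi hint.integrableOn hint.integrableOn]
      ring
    rw [tendsto_congr h3]
    have h4 := (tendsto_const_nhds (x := ∫ z, w0z z * g z) (f := atBot)).sub h1
    simpa [hinttotal] using h4
  -- limits of coefficients
  have hctop : Tendsto c atTop (𝓝 cp) := by
    apply tendsto_of_exp_bound_atTop hdc
    filter_upwards [Filter.eventually_ge_atTop (0:ℝ)] with z hz
    have := hCc z
    rwa [if_pos hz] at this
  have hcbot : Tendsto c atBot (𝓝 cm) := by
    apply tendsto_of_exp_bound_atBot hdc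
    filter_upwards [Filter.eventually_lt_atBot (0:ℝ)] with z hz
    have := hCc z
    rwa [if_neg (not_le.mpr hz)] at this
  have hgtop : Tendsto g atTop (𝓝 gp) := by
    apply tendsto_of_exp_bound_atTop hdg
    filter_upwards [Filter.eventually_ge_atTop (0:ℝ)] with z hz
    have := hCg z
    rwa [if_pos hz] at this
  have hgbot : Tendsto g atBot (𝓝 gm) := by
    apply tendsto_of_exp_bound_atBot hdg
    filter_upwards [Filter.eventually_lt_atBot (0:ℝ)] with z hz
    have := hCg z
    rwa [if_neg (not_le.mpr hz)] at this
  have hwtop : Tendsto w0z atTop (𝓝 0) := by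
    apply tendsto_of_exp_bound_atTop hdw
    exact Filter.Eventually.of_forall fun z => by simpa using hwbd z
  have hwbot : Tendsto w0z atBot (𝓝 0) := by
    apply tendsto_of_exp_bound_atBot hdw
    exact Filter.Eventually.of_forall fun z => by simpa using hwbd z
  have hw'top : Tendsto (deriv w0z) atTop (𝓝 0) := by
    apply tendsto_of_exp_bound_atTop hdw
    exact Filter.Eventually.of_forall fun z => by simpa using hw'bd z
  have hw'bot : Tendsto (deriv w0z) atBot (𝓝 0) := by
    apply tendsto_of_exp_bound_atBot hdw
    exact Filter.Eventually.of_forall fun z => by simpa using hw'bd z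
  -- ODE part
  refine ⟨aux_ode hwne hw1 hw2 hg hJd hker hφdef, ?_, ?_⟩
  · -- limit at +∞
    have main := aux_tendsto_top (w' := deriv w0z) (w'' := deriv (deriv w0z)) hcp hctop hneg
      hw1 hw2 (fun z => by linarith [hker z]) hwtop hw'top hgtop hJd hJtop
    have hα : Tendsto (fun z => α * w0z z) atTop (𝓝 (α * 0)) := hwtop.const_mul α
    have := hα.add main
    rw [mul_zero, zero_add] at this
    apply this.congr fun z => (hφdef z).symm
  · -- limit at -∞ via reflection
    have hw1r : ∀ z : ℝ, HasDerivAt (fun z => w0z (-z)) (-(deriv w0z (-z))) z := by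
      intro z
      have := (hw1 (-z)).comp z (hasDerivAt_neg z)
      simpa [Function.comp_def] using this
    have hw2r : ∀ z : ℝ, HasDerivAt (fun z => -(deriv w0z (-z))) (deriv (deriv w0z) (-z)) z := by
      intro z
      have := ((hw2 (-z)).comp z (hasDerivAt_neg z)).neg
      simpa [Function.comp_def, Pi.neg_def] using this
    have hJdr : ∀ ξ : ℝ, HasDerivAt (fun ξ => -(∫ η in Set.Iic (-ξ), w0z η * g η))
        (w0z (-ξ) * g (-ξ)) ξ := by
      intro ξ
      have := ((hJd (-ξ)).comp ξ (hasDerivAt_neg ξ)).neg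
      simpa [Function.comp_def, Pi.neg_def] using this
    have main := aux_tendsto_top (c := fun z => c (-z)) (w := fun z => w0z (-z))
      (w' := fun z => -(deriv w0z (-z))) (w'' := fun z => deriv (deriv w0z) (-z))
      (g := fun z => g (-z)) (J := fun ξ => -(∫ η in Set.Iic (-ξ), w0z η * g η))
      hcm (hcbot.comp tendsto_neg_atTop_atBot) (fun z => hneg (-z))
      hw1r hw2r (fun z => by linarith [hker (-z)])
      (hwbot.comp tendsto_neg_atTop_atBot)
      (by simpa using (hw'bot.comp tendsto_neg_atTop_atBot).neg)
      (hgbot.comp tendsto_neg_atTop_atBot) hJdr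
      (by simpa using (hJbot.comp tendsto_neg_atTop_atBot).neg)
    -- rewrite the reflected expression
    have hrefl : ∀ z : ℝ, w0z (-z) * (∫ ξ in (0:ℝ)..z,
        ((fun x => w0z (-x)) ξ ^ 2)⁻¹ * (-(∫ η in Set.Iic (-ξ), w0z η * g η)))
        = w0z (-z) * ∫ ξ in (0:ℝ)..(-z), (w0z ξ ^ 2)⁻¹ * ∫ η in Set.Iic ξ, w0z η * g η := by
      intro z
      congr 1
      have h1 : (∫ ξ in (0:ℝ)..z, ((w0z (-ξ)) ^ 2)⁻¹ * (-(∫ η in Set.Iic (-ξ), w0z η * g η)))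
          = -∫ ξ in (0:ℝ)..z, (fun x => (w0z x ^ 2)⁻¹ * ∫ η in Set.Iic x, w0z η * g η) (-ξ) := by
        rw [← intervalIntegral.integral_neg]
        congr 1
        funext ξ
        simp
      rw [h1, intervalIntegral.integral_comp_neg
        (fun x => (w0z x ^ 2)⁻¹ * ∫ η in Set.Iic x, w0z η * g η), neg_zero,
        intervalIntegral.integral_symm]
      simp
    have main2 : Tendsto (fun z => w0z (-z) * ∫ ξ in (0:ℝ)..(-z),
        (w0z ξ ^ 2)⁻¹ * ∫ η in Set.Iic ξ, w0z η * g η) atTop (𝓝 (gm / cm)) := by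
      apply main.congr
      intro z
      exact hrefl z
    have hα : Tendsto (fun z => α * w0z (-z)) atTop (𝓝 (α * 0)) :=
      (hwbot.comp tendsto_neg_atTop_atBot).const_mul α
    have h6 := hα.add main2
    rw [mul_zero, zero_add] at h6
    have h7 : Tendsto (fun z => φ (-z)) atTop (𝓝 (gm / cm)) :=
      h6.congr fun z => (hφdef (-z)).symm
    have h8 := h7.comp tendsto_neg_atBot_atTop
    apply h8.congr
    intro z
    simp [Function.comp]
end

section
/- Barrier estimate on a ball (Lemma 3.7): suppose ρ ∈ C²(B̄_R) satisfies ε²Δρ − c^ε(x)ρ = 0 in B_R ⊂ ℝ^N with c^ε ≥ c₀ > 0. Then for every ε₀ > 0 there exists σ₂ > 0 depending only on ε₀, R^{-1}, c₀, N such that |ρ(x)| ≤ 2‖ρ‖_{L^∞(B_R)} e^{−σ₂(R−|x|)/ε} for all x ∈ B_R and ε ∈ (0, ε₀]. -/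
open MeasureTheory Real

/-- The Laplacian of a scalar function on Euclidean space, as the sum of
second directional derivatives along the coordinate directions. -/
noncomputable def lapl {N : ℕ} (g : EuclideanSpace ℝ (Fin N) → ℝ)
    (x : EuclideanSpace ℝ (Fin N)) : ℝ :=
  ∑ i : Fin N, iteratedFDeriv ℝ 2 g x ![EuclideanSpace.single i 1, EuclideanSpace.single i 1]

section Aux

variable {E : Type*} [NormedAddCommGroup E] [NormedSpace ℝ E]

lemma exists_open_contDiffOn {f : E → ℝ} {x : E} (hf : ContDiffAt ℝ 2 f x) :
    ∃ U, IsOpen U ∧ x ∈ U ∧ ContDiffOn ℝ 2 f U := by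
  obtain ⟨u, uo, xu, h⟩ := ContDiffWithinAt.contDiffOn' le_rfl (by simp) hf
  exact ⟨u, uo, xu, by simpa using h⟩

/-- 1D second derivative test at a local max. -/
lemma second_deriv_test_max {φ : ℝ → ℝ}
    (hd : ∀ᶠ t in nhds (0:ℝ), DifferentiableAt ℝ φ t)
    (hd2 : DifferentiableAt ℝ (deriv φ) 0)
    (hmax : IsLocalMax φ 0) : deriv (deriv φ) 0 ≤ 0 := by
  by_contra hcon
  push_neg at hcon
  have h0 : deriv φ 0 = 0 := hmax.deriv_eq_zero
  have hslope : Filter.Tendsto (slope (deriv φ) 0) (nhdsWithin 0 {(0:ℝ)}ᶜ)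
      (nhds (deriv (deriv φ) 0)) := hasDerivAt_iff_tendsto_slope.mp hd2.hasDerivAt
  have hpos : ∀ᶠ t in nhdsWithin (0:ℝ) (Set.Ioi 0), 0 < deriv φ t := by
    have h1 : ∀ᶠ t in nhdsWithin (0:ℝ) (Set.Ioi 0), 0 < slope (deriv φ) 0 t := by
      have := (hslope.mono_left (nhdsWithin_mono _ (fun t ht => ne_of_gt ht))).eventually
        (eventually_gt_nhds hcon)
      exact this
    have h2 : ∀ᶠ t in nhdsWithin (0:ℝ) (Set.Ioi 0), (0:ℝ) < t :=
      eventually_mem_nhdsWithin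
    filter_upwards [h1, h2] with t h1 h2
    have : slope (deriv φ) 0 t = deriv φ t / t := by
      simp [slope_def_field, h0]
    rw [this] at h1
    exact (div_pos_iff.mp h1).elim (fun h => h.1) (fun h => absurd h2 (not_lt.2 h.2.le))
  obtain ⟨δ, hδmem, hδ⟩ := mem_nhdsGT_iff_exists_Ioo_subset.mp hpos
  have hδpos : (0:ℝ) < δ := hδmem
  obtain ⟨δ₁, hδ₁pos, H⟩ := Metric.eventually_nhds_iff.mp (hd.and hmax)
  set r : ℝ := min (δ/2) (δ₁/2) with hr
  have hrpos : 0 < r := lt_min (by linarith) (by linarith)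
  have hrIcc : ∀ t ∈ Set.Icc (0:ℝ) r, DifferentiableAt ℝ φ t ∧ φ t ≤ φ 0 := by
    intro t ht
    apply H
    rw [Real.dist_eq, sub_zero, abs_of_nonneg ht.1]
    calc t ≤ r := ht.2
    _ ≤ δ₁/2 := min_le_right _ _
    _ < δ₁ := by linarith
  have hmono : StrictMonoOn φ (Set.Icc 0 r) := by
    apply strictMonoOn_of_deriv_pos (convex_Icc 0 r)
    · exact fun t ht => ((hrIcc t ht).1.continuousAt).continuousWithinAt
    · intro t ht
      rw [interior_Icc] at ht
      apply hδ
      exact ⟨ht.1, lt_of_lt_of_le ht.2 (le_trans (min_le_left _ _) (by linarith))⟩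
  have := hmono (Set.left_mem_Icc.2 hrpos.le) (Set.right_mem_Icc.2 hrpos.le) hrpos
  have := (hrIcc r (Set.right_mem_Icc.2 hrpos.le)).2
  linarith

/-- Second derivative along a line, and auxiliary differentiability facts. -/
lemma deriv2_line {f : E → ℝ} {x : E} (hf : ContDiffAt ℝ 2 f x) (v : E) :
    deriv (deriv (fun t : ℝ => f (x + t • v))) 0 = fderiv ℝ (fderiv ℝ f) x v v ∧
    (∀ᶠ t in nhds (0:ℝ), DifferentiableAt ℝ (fun t : ℝ => f (x + t • v)) t) ∧
    DifferentiableAt ℝ (deriv (fun t : ℝ => f (x + t • v))) 0 := by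
  obtain ⟨U, hUo, hxU, hU⟩ := exists_open_contDiffOn hf
  set L : ℝ → E := fun t => x + t • v with hLdef
  have hL : ∀ t : ℝ, HasDerivAt L v t := by
    intro t
    have h1 : HasDerivAt (fun t : ℝ => t • v) ((1:ℝ) • v) t := (hasDerivAt_id t).smul_const v
    rw [one_smul] at h1
    exact h1.const_add x
  have hLcont : Continuous L := continuous_const.add (continuous_id.smul continuous_const)
  have hL0 : L 0 = x := by simp [hLdef]
  have hT : IsOpen {t : ℝ | L t ∈ U} := hUo.preimage hLcont
  have hT0 : (0:ℝ) ∈ {t : ℝ | L t ∈ U} := by simp [hL0, hxU]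
  have hdiff : ∀ t ∈ {t : ℝ | L t ∈ U}, HasDerivAt (fun t : ℝ => f (L t))
      (fderiv ℝ f (L t) v) t := by
    intro t ht
    have hfd : DifferentiableAt ℝ f (L t) :=
      ((hU.differentiableOn (by norm_num)).differentiableAt (hUo.mem_nhds ht))
    exact hfd.hasFDerivAt.comp_hasDerivAt t (hL t)
  have hTn : {t : ℝ | L t ∈ U} ∈ nhds (0:ℝ) := hT.mem_nhds hT0
  have ev_diff : ∀ᶠ t in nhds (0:ℝ), DifferentiableAt ℝ (fun t : ℝ => f (L t)) t := by
    filter_upwards [hTn] with t ht; exact (hdiff t ht).differentiableAt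
  have ev_deriv : deriv (fun t : ℝ => f (L t)) =ᶠ[nhds (0:ℝ)]
      (fun t => fderiv ℝ f (L t) v) := by
    filter_upwards [hTn] with t ht; exact (hdiff t ht).deriv
  -- the derivative of t ↦ fderiv f (L t) v at 0
  have hF1 : ContDiffAt ℝ 1 (fderiv ℝ f) x := ContDiffAt.fderiv_right hf (by norm_num)
  have hF : DifferentiableAt ℝ (fderiv ℝ f) x := hF1.differentiableAt (by norm_num)
  have hFL : HasDerivAt (fun t : ℝ => fderiv ℝ f (L t)) (fderiv ℝ (fderiv ℝ f) x v) 0 := by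
    have hF' : HasFDerivAt (fderiv ℝ f) (fderiv ℝ (fderiv ℝ f) x) (L 0) := by
      rw [hL0]; exact hF.hasFDerivAt
    exact hF'.comp_hasDerivAt 0 (hL 0)
  have hg : HasDerivAt (fun t : ℝ => fderiv ℝ f (L t) v) (fderiv ℝ (fderiv ℝ f) x v v) 0 :=
    (ContinuousLinearMap.apply ℝ ℝ v).hasFDerivAt.comp_hasDerivAt 0 hFL
  refine ⟨?_, ev_diff, ?_⟩
  · rw [ev_deriv.deriv_eq]
    exact hg.deriv
  · rw [ev_deriv.differentiableAt_iff]
    exact hg.differentiableAt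

/-- Second derivative test at a local max, along any direction. -/
lemma fderiv2_nonpos_of_isLocalMax {f : E → ℝ} {x : E} (hf : ContDiffAt ℝ 2 f x)
    (hmax : IsLocalMax f x) (v : E) : fderiv ℝ (fderiv ℝ f) x v v ≤ 0 := by
  obtain ⟨heq, hdiff, hd2⟩ := deriv2_line hf v
  rw [← heq]
  apply second_deriv_test_max hdiff hd2
  have hcont : Filter.Tendsto (fun t : ℝ => x + t • v) (nhds 0) (nhds x) := by
    have : Continuous (fun t : ℝ => x + t • v) :=
      continuous_const.add (continuous_id.smul continuous_const)
    simpa using this.tendsto 0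
  have := hcont.eventually hmax
  filter_upwards [this] with t ht
  simpa using ht

/-- Linearity of the second derivative (subtraction). -/
lemma fderiv2_sub {f g : E → ℝ} {x : E} (hf : ContDiffAt ℝ 2 f x) (hg : ContDiffAt ℝ 2 g x)
    (v w : E) :
    fderiv ℝ (fderiv ℝ (fun y => f y - g y)) x v w
      = fderiv ℝ (fderiv ℝ f) x v w - fderiv ℝ (fderiv ℝ g) x v w := by
  obtain ⟨U, hUo, hxU, hU⟩ := exists_open_contDiffOn hf
  obtain ⟨V, hVo, hxV, hV⟩ := exists_open_contDiffOn hg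
  have h1 : fderiv ℝ (fun y => f y - g y) =ᶠ[nhds x]
      (fun y => fderiv ℝ f y - fderiv ℝ g y) := by
    filter_upwards [(hUo.inter hVo).mem_nhds ⟨hxU, hxV⟩] with y hy
    have hfd : DifferentiableAt ℝ f y :=
      (hU.differentiableOn (by norm_num)).differentiableAt (hUo.mem_nhds hy.1)
    have hgd : DifferentiableAt ℝ g y :=
      (hV.differentiableOn (by norm_num)).differentiableAt (hVo.mem_nhds hy.2)
    exact fderiv_sub hfd hgd
  rw [h1.fderiv_eq]
  have hf1 : ContDiffAt ℝ 1 (fderiv ℝ f) x := ContDiffAt.fderiv_right hf (by norm_num)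
  have hg1 : ContDiffAt ℝ 1 (fderiv ℝ g) x := ContDiffAt.fderiv_right hg (by norm_num)
  have hfd2 : DifferentiableAt ℝ (fderiv ℝ f) x := hf1.differentiableAt (by norm_num)
  have hgd2 : DifferentiableAt ℝ (fderiv ℝ g) x := hg1.differentiableAt (by norm_num)
  rw [fderiv_fun_sub hfd2 hgd2]
  simp

end Aux

/-- 1D computation: second derivative of exp of a quadratic. -/
lemma deriv2_exp_quadratic (a c p q : ℝ) :
    deriv (deriv (fun t : ℝ => Real.exp (a * (c + 2*p*t + q*t^2)))) 0
      = Real.exp (a * c) * ((2*a*p)^2 + 2*a*q) := by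
  have h1 : ∀ t : ℝ, HasDerivAt (fun t : ℝ => a * (c + 2*p*t + q*t^2))
      (a * (2*p + q*(2*t))) t := by
    intro t
    have hb : HasDerivAt (fun t : ℝ => c + 2*p*t + q*t^2) (2*p + q*(2*t)) t := by
      have := (((hasDerivAt_id t).const_mul (2*p)).const_add c).add
        ((hasDerivAt_pow 2 t).const_mul q)
      refine this.congr_deriv ?_
      rw [show (2:ℕ)-1 = 1 from rfl]; push_cast; ring
    exact hb.const_mul a
  have h2 : deriv (fun t : ℝ => Real.exp (a * (c + 2*p*t + q*t^2)))
      = fun t => Real.exp (a * (c + 2*p*t + q*t^2)) * (a * (2*p + q*(2*t))) := by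
    funext t; exact ((h1 t).exp).deriv
  rw [h2]
  have hinner : HasDerivAt (fun t : ℝ => a * (2*p + q*(2*t))) (a * (q*2)) 0 := by
    have := (((hasDerivAt_id (0:ℝ)).const_mul 2).const_mul q).const_add (2*p)
    have h := this.const_mul a
    refine h.congr_deriv ?_
    ring
  have h3 := ((h1 0).exp).mul hinner
  have h4 := h3.deriv
  rw [← Pi.mul_def, h4]
  simp only [mul_zero, add_zero, zero_pow, ne_eq, OfNat.ofNat_ne_zero, not_false_iff]
  ring_nf

section Lapl

variable {N : ℕ}

lemma lapl_sub {f g : EuclideanSpace ℝ (Fin N) → ℝ} {x : EuclideanSpace ℝ (Fin N)}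
    (hf : ContDiffAt ℝ 2 f x) (hg : ContDiffAt ℝ 2 g x) :
    lapl (fun y => f y - g y) x = lapl f x - lapl g x := by
  unfold lapl
  rw [← Finset.sum_sub_distrib]
  refine Finset.sum_congr rfl fun i _ => ?_
  rw [iteratedFDeriv_two_apply, iteratedFDeriv_two_apply, iteratedFDeriv_two_apply]
  simp only [Matrix.cons_val_zero, Matrix.cons_val_one, Matrix.head_cons]
  exact fderiv2_sub hf hg _ _

lemma lapl_neg (f : EuclideanSpace ℝ (Fin N) → ℝ) (x : EuclideanSpace ℝ (Fin N)) :
    lapl (fun y => -f y) x = -lapl f x := by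
  unfold lapl
  rw [← Finset.sum_neg_distrib]
  refine Finset.sum_congr rfl fun i _ => ?_
  have : (fun y => -f y) = -f := rfl
  rw [this, iteratedFDeriv_neg_apply]
  simp

lemma lapl_const_mul (M : ℝ) {b : EuclideanSpace ℝ (Fin N) → ℝ} (hb : ContDiff ℝ 2 b)
    (x : EuclideanSpace ℝ (Fin N)) :
    lapl (fun y => M * b y) x = M * lapl b x := by
  unfold lapl
  rw [Finset.mul_sum]
  refine Finset.sum_congr rfl fun i _ => ?_
  have : (fun y => M * b y) = M • b := by funext y; simp
  rw [this, iteratedFDeriv_const_smul_apply hb.contDiffAt]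
  simp

lemma lapl_nonpos_of_isLocalMax {f : EuclideanSpace ℝ (Fin N) → ℝ}
    {x : EuclideanSpace ℝ (Fin N)} (hf : ContDiffAt ℝ 2 f x) (hmax : IsLocalMax f x) :
    lapl f x ≤ 0 := by
  unfold lapl
  refine Finset.sum_nonpos fun i _ => ?_
  rw [iteratedFDeriv_two_apply]
  simp only [Matrix.cons_val_zero, Matrix.cons_val_one, Matrix.head_cons]
  exact fderiv2_nonpos_of_isLocalMax hf hmax _

lemma barrier_contDiff (a R : ℝ) :
    ContDiff ℝ 2 (fun z : EuclideanSpace ℝ (Fin N) => Real.exp (a * (‖z‖^2 - R^2))) :=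
  Real.contDiff_exp.comp (contDiff_const.mul ((contDiff_norm_sq ℝ).sub contDiff_const))

lemma norm_sq_eq_sum (y : EuclideanSpace ℝ (Fin N)) : ‖y‖^2 = ∑ i, (y i)^2 := by
  rw [EuclideanSpace.norm_eq, Real.sq_sqrt (by positivity)]
  simp [sq_abs]

lemma lapl_barrier (a R : ℝ) (y : EuclideanSpace ℝ (Fin N)) :
    lapl (fun z => Real.exp (a * (‖z‖^2 - R^2))) y
      = Real.exp (a * (‖y‖^2 - R^2)) * (4*a^2*‖y‖^2 + 2*a*N) := by
  have key : ∀ i : Fin N,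
      iteratedFDeriv ℝ 2 (fun z : EuclideanSpace ℝ (Fin N) => Real.exp (a * (‖z‖^2 - R^2))) y
        ![EuclideanSpace.single i 1, EuclideanSpace.single i 1]
      = Real.exp (a * (‖y‖^2 - R^2)) * ((2*a*(y i))^2 + 2*a) := by
    intro i
    rw [iteratedFDeriv_two_apply]
    simp only [Matrix.cons_val_zero, Matrix.cons_val_one, Matrix.head_cons]
    rw [← (deriv2_line ((barrier_contDiff a R).contDiffAt) (EuclideanSpace.single i 1)).1]
    have hline : (fun t : ℝ =>
        Real.exp (a * (‖y + t • EuclideanSpace.single i (1:ℝ)‖^2 - R^2)))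
        = fun t : ℝ => Real.exp (a * ((‖y‖^2 - R^2) + 2*(y i)*t + 1*t^2)) := by
      funext t
      congr 1
      have h1 : (inner ℝ y (t • EuclideanSpace.single i (1:ℝ)) : ℝ) = t * y i := by
        rw [real_inner_smul_right, EuclideanSpace.inner_single_right]
        simp
      rw [norm_add_sq_real, h1, norm_smul]
      simp only [EuclideanSpace.norm_single, norm_one, mul_one, Real.norm_eq_abs]
      rw [sq_abs]
      ring
    rw [hline, deriv2_exp_quadratic a (‖y‖^2 - R^2) (y i) 1]
    ring
  rw [lapl, Finset.sum_congr rfl fun i _ => key i, ← Finset.mul_sum]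
  congr 1
  have : ∀ i : Fin N, (2*a*(y i))^2 + 2*a = 4*a^2*(y i)^2 + 2*a := fun i => by ring
  rw [Finset.sum_congr rfl fun i _ => this i, Finset.sum_add_distrib, ← Finset.mul_sum,
    Finset.sum_const, Finset.card_univ, Fintype.card_fin, nsmul_eq_mul, ← norm_sq_eq_sum]
  ring

end Lapl

/-- one-sided maximum principle with barrier `b`. -/
lemma barrier_max_principle {N : ℕ} {R ε M c₀ a : ℝ} (hR : 0 < R) (hM : 0 ≤ M)
    (hc₀ : 0 < c₀)
    {u cε : EuclideanSpace ℝ (Fin N) → ℝ}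
    (hbarrier : ∀ y ∈ Metric.ball (0:EuclideanSpace ℝ (Fin N)) R,
      ε^2 * lapl (fun z : EuclideanSpace ℝ (Fin N) => Real.exp (a * (‖z‖^2 - R^2))) y
        ≤ c₀ * Real.exp (a * (‖y‖^2 - R^2)))
    (hu : ContDiffOn ℝ 2 u (Metric.closedBall 0 R))
    (hc : ∀ y ∈ Metric.closedBall (0:EuclideanSpace ℝ (Fin N)) R, c₀ ≤ cε y)
    (hpde : ∀ y ∈ Metric.ball (0:EuclideanSpace ℝ (Fin N)) R, ε^2 * lapl u y = cε y * u y)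
    (hMb : ∀ y ∈ Metric.ball (0:EuclideanSpace ℝ (Fin N)) R, |u y| ≤ M) :
    ∀ x ∈ Metric.ball (0:EuclideanSpace ℝ (Fin N)) R,
      u x ≤ M * Real.exp (a * (‖x‖^2 - R^2)) := by
  set b : EuclideanSpace ℝ (Fin N) → ℝ := fun z => Real.exp (a * (‖z‖^2 - R^2)) with hbdef
  have hb : ContDiff ℝ 2 b := barrier_contDiff a R
  have hbpos : ∀ y, 0 < b y := fun y => Real.exp_pos _
  -- boundary bound by continuity
  have hclos : Metric.closedBall (0:EuclideanSpace ℝ (Fin N)) R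
      = closure (Metric.ball (0:EuclideanSpace ℝ (Fin N)) R) := (closure_ball 0 hR.ne').symm
  have hbd : ∀ y ∈ Metric.closedBall (0:EuclideanSpace ℝ (Fin N)) R, u y ≤ M := by
    intro y hy
    have hycl : y ∈ closure (Metric.ball (0:EuclideanSpace ℝ (Fin N)) R) := hclos ▸ hy
    have hne : (nhdsWithin y (Metric.ball (0:EuclideanSpace ℝ (Fin N)) R)).NeBot :=
      mem_closure_iff_nhdsWithin_neBot.mp hycl
    have hcw : Filter.Tendsto u (nhdsWithin y (Metric.ball (0:EuclideanSpace ℝ (Fin N)) R))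
        (nhds (u y)) :=
      ((hu.continuousOn y hy).mono Metric.ball_subset_closedBall)
    refine le_of_tendsto hcw ?_
    filter_upwards [self_mem_nhdsWithin] with z hz
    exact (abs_le.mp (hMb z hz)).2
  -- w and its max
  set w : EuclideanSpace ℝ (Fin N) → ℝ := fun y => u y - M * b y with hwdef
  have hwc : ContinuousOn w (Metric.closedBall 0 R) :=
    (hu.continuousOn).sub ((continuous_const.mul hb.continuous).continuousOn)
  obtain ⟨x₀, hx₀mem, hx₀max⟩ :=
    (isCompact_closedBall (0:EuclideanSpace ℝ (Fin N)) R).exists_isMaxOn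
      ⟨0, Metric.mem_closedBall_self hR.le⟩ hwc
  have key : w x₀ ≤ 0 := by
    by_contra hpos
    push_neg at hpos
    -- x₀ is interior
    have hx₀ball : x₀ ∈ Metric.ball (0:EuclideanSpace ℝ (Fin N)) R := by
      rcases lt_or_eq_of_le (mem_closedBall_zero_iff.mp hx₀mem) with h | h
      · exact mem_ball_zero_iff.mpr h
      · exfalso
        have hb1 : b x₀ = 1 := by rw [hbdef]; simp [h]
        have := hbd x₀ hx₀mem
        have : w x₀ ≤ 0 := by rw [hwdef]; simp only [hb1]; linarith
        linarith
    have hloc : IsLocalMax w x₀ :=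
      hx₀max.isLocalMax (Filter.mem_of_superset
        (Metric.isOpen_ball.mem_nhds hx₀ball) Metric.ball_subset_closedBall)
    have hu2 : ContDiffAt ℝ 2 u x₀ :=
      (hu.mono Metric.ball_subset_closedBall).contDiffAt
        (Metric.isOpen_ball.mem_nhds hx₀ball)
    have hMb2 : ContDiffAt ℝ 2 (fun y => M * b y) x₀ :=
      (contDiff_const.mul hb).contDiffAt
    have hw2 : ContDiffAt ℝ 2 w x₀ := hu2.sub hMb2
    have hlapl : lapl w x₀ ≤ 0 := lapl_nonpos_of_isLocalMax hw2 hloc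
    have hsplit : lapl w x₀ = lapl u x₀ - M * lapl b x₀ := by
      rw [hwdef]
      rw [lapl_sub hu2 hMb2, lapl_const_mul M hb]
    have hpde₀ := hpde x₀ hx₀ball
    have hbar₀ := hbarrier x₀ hx₀ball
    have hc₀' := hc x₀ hx₀mem
    have hb₀ := hbpos x₀
    have hw₀ : u x₀ = w x₀ + M * b x₀ := by rw [hwdef]; ring
    -- 0 ≥ ε² lapl w = cε u - M ε² lapl b ≥ cε u - M c₀ b ≥ cε u - M cε b = cε w > 0
    have h1 : ε^2 * lapl w x₀ ≤ 0 := by nlinarith [sq_nonneg ε]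
    have h2 : ε^2 * lapl w x₀ = cε x₀ * u x₀ - M * (ε^2 * lapl b x₀) := by
      rw [hsplit]; rw [← hpde₀]; ring
    have h3 : M * (ε^2 * lapl b x₀) ≤ M * (c₀ * b x₀) :=
      mul_le_mul_of_nonneg_left hbar₀ hM
    have h4 : M * (c₀ * b x₀) ≤ M * (cε x₀ * b x₀) := by
      have := mul_le_mul_of_nonneg_right hc₀' (hbpos x₀).le
      nlinarith
    have h5 : 0 < cε x₀ * w x₀ := mul_pos (lt_of_lt_of_le hc₀ hc₀') hpos
    nlinarith
  intro x hx
  have := hx₀max (Metric.ball_subset_closedBall hx)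
  have hwx : w x ≤ w x₀ := this
  have : w x ≤ 0 := le_trans hwx key
  rw [hwdef] at this
  simpa [hbdef] using this

/-- Lemma 3.7: barrier estimate on a ball.  Solutions of
`ε²Δρ − c^ε ρ = 0` in `B_R` with `c^ε ≥ c₀ > 0` satisfy
`|ρ(x)| ≤ 2‖ρ‖_{L^∞(B_R)} e^{−σ₂(R−|x|)/ε}`, with `σ₂` depending only on
`ε₀`, `R⁻¹`, `c₀` and `N`. -/
theorem barrier_estimate_on_ball
    {N : ℕ} (R : ℝ) (hR : 0 < R) (c₀ : ℝ) (hc₀ : 0 < c₀)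
    (ε₀ : ℝ) (hε₀ : 0 < ε₀) :
    ∃ σ₂ : ℝ, 0 < σ₂ ∧
      ∀ ε : ℝ, 0 < ε → ε ≤ ε₀ →
      ∀ cε ρ : EuclideanSpace ℝ (Fin N) → ℝ,
        (∀ x ∈ Metric.closedBall (0 : EuclideanSpace ℝ (Fin N)) R, c₀ ≤ cε x) →
        ContDiffOn ℝ 2 ρ (Metric.closedBall (0 : EuclideanSpace ℝ (Fin N)) R) →
        (∀ x ∈ Metric.ball (0 : EuclideanSpace ℝ (Fin N)) R,
          ε ^ 2 * lapl ρ x - cε x * ρ x = 0) →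
        ∀ M : ℝ, (∀ y ∈ Metric.ball (0 : EuclideanSpace ℝ (Fin N)) R, |ρ y| ≤ M) →
        ∀ x ∈ Metric.ball (0 : EuclideanSpace ℝ (Fin N)) R,
          |ρ x| ≤ 2 * M * Real.exp (-σ₂ * (R - ‖x‖) / ε) := by
  set σ : ℝ := min (Real.sqrt (c₀/8)) (c₀*R/((4*N+4)*ε₀)) with hσdef
  have hσpos : 0 < σ := by
    apply lt_min
    · exact Real.sqrt_pos.mpr (by linarith)
    · apply div_pos (mul_pos hc₀ hR)
      apply mul_pos _ hε₀
      positivity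
  have hσsq : σ^2 ≤ c₀/8 := by
    have h1 : σ ≤ Real.sqrt (c₀/8) := min_le_left _ _
    nlinarith [Real.sq_sqrt (show (0:ℝ) ≤ c₀/8 by linarith), hσpos]
  have hσ2 : σ * ((4*N+4)*ε₀) ≤ c₀ * R := by
    have h1 : σ ≤ c₀*R/((4*N+4)*ε₀) := min_le_right _ _
    have h2 : (0:ℝ) < (4*N+4)*ε₀ := by positivity
    calc σ * ((4*N+4)*ε₀) ≤ (c₀*R/((4*N+4)*ε₀)) * ((4*N+4)*ε₀) :=
          mul_le_mul_of_nonneg_right h1 h2.le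
      _ = c₀ * R := by field_simp
  refine ⟨σ, hσpos, ?_⟩
  intro ε hε hεε₀ cε ρ hc hρ hpde M hM x hx
  set a : ℝ := σ / (R * ε) with hadef
  have hapos : 0 < a := div_pos hσpos (mul_pos hR hε)
  have hM0 : 0 ≤ M := le_trans (abs_nonneg _) (hM x hx)
  -- barrier differential inequality
  have hbarrier : ∀ y ∈ Metric.ball (0:EuclideanSpace ℝ (Fin N)) R,
      ε^2 * lapl (fun z : EuclideanSpace ℝ (Fin N) => Real.exp (a * (‖z‖^2 - R^2))) y
        ≤ c₀ * Real.exp (a * (‖y‖^2 - R^2)) := by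
    intro y hy
    rw [lapl_barrier a R y]
    have hby : (0:ℝ) < Real.exp (a * (‖y‖^2 - R^2)) := Real.exp_pos _
    have hyR : ‖y‖ < R := mem_ball_zero_iff.mp hy
    have hkey : ε^2 * (4*a^2*‖y‖^2 + 2*a*(N:ℝ)) ≤ c₀ := by
      have hae : a * ε = σ / R := by rw [hadef]; field_simp
      have h1 : ε^2 * (4*a^2*‖y‖^2) ≤ 4*σ^2 := by
        have : ε^2 * (4*a^2*‖y‖^2) = 4*(a*ε)^2*‖y‖^2 := by ring
        rw [this, hae, div_pow]
        have hR2 : (0:ℝ) < R^2 := by positivity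
        rw [show 4*(σ^2/R^2)*‖y‖^2 = (4*σ^2*‖y‖^2)/R^2 by ring, div_le_iff₀ hR2]
        have hy2 : ‖y‖^2 ≤ R^2 := by nlinarith [norm_nonneg y]
        nlinarith [hσpos, sq_nonneg σ]
      have h2 : ε^2 * (2*a*(N:ℝ)) ≤ c₀/2 := by
        have : ε^2 * (2*a*(N:ℝ)) = 2*(N:ℝ)*ε*(a*ε) := by ring
        rw [this, hae]
        have hN : (0:ℝ) ≤ (N:ℝ) := Nat.cast_nonneg N
        rw [show 2*(N:ℝ)*ε*(σ/R) = (2*(N:ℝ)*ε*σ)/R by ring,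
          div_le_div_iff₀ hR (by norm_num : (0:ℝ) < 2)]
        nlinarith [mul_le_mul_of_nonneg_left hεε₀
          (by positivity : (0:ℝ) ≤ 4*(N:ℝ)*σ), mul_nonneg (mul_nonneg (by norm_num : (0:ℝ) ≤ 4) hσpos.le) hε₀.le]
      nlinarith [hσsq]
    calc ε^2 * (Real.exp (a * (‖y‖^2 - R^2)) * (4*a^2*‖y‖^2 + 2*a*(N:ℝ)))
        = (ε^2 * (4*a^2*‖y‖^2 + 2*a*(N:ℝ))) * Real.exp (a * (‖y‖^2 - R^2)) := by ring
      _ ≤ c₀ * Real.exp (a * (‖y‖^2 - R^2)) := mul_le_mul_of_nonneg_right hkey hby.le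
  -- apply max principle to ρ and -ρ
  have hup : ∀ z ∈ Metric.ball (0:EuclideanSpace ℝ (Fin N)) R,
      ρ z ≤ M * Real.exp (a * (‖z‖^2 - R^2)) := by
    apply barrier_max_principle hR hM0 hc₀ hbarrier hρ hc
    · intro y hy; have := hpde y hy; linarith
    · exact hM
  have hdown : ∀ z ∈ Metric.ball (0:EuclideanSpace ℝ (Fin N)) R,
      -ρ z ≤ M * Real.exp (a * (‖z‖^2 - R^2)) := by
    have h1 : ContDiffOn ℝ 2 (fun y => -ρ y) (Metric.closedBall 0 R) := hρ.neg
    have h2 : ∀ y ∈ Metric.ball (0:EuclideanSpace ℝ (Fin N)) R,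
        ε^2 * lapl (fun y => -ρ y) y = cε y * (-ρ y) := by
      intro y hy
      rw [lapl_neg]
      have := hpde y hy
      ring_nf
      ring_nf at this
      linarith
    have h3 : ∀ y ∈ Metric.ball (0:EuclideanSpace ℝ (Fin N)) R, |(fun y => -ρ y) y| ≤ M := by
      intro y hy; simpa [abs_neg] using hM y hy
    exact fun z hz => barrier_max_principle hR hM0 hc₀ hbarrier h1 hc h2 h3 z hz
  -- conclude
  have hxR : ‖x‖ < R := mem_ball_zero_iff.mp hx
  have habs : |ρ x| ≤ M * Real.exp (a * (‖x‖^2 - R^2)) :=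
    abs_le.mpr ⟨by linarith [hdown x hx], hup x hx⟩
  have hexp : Real.exp (a * (‖x‖^2 - R^2)) ≤ Real.exp (-σ * (R - ‖x‖) / ε) := by
    apply Real.exp_le_exp.mpr
    rw [hadef, div_mul_eq_mul_div, div_le_div_iff₀ (mul_pos hR hε) hε]
    have h0 : 0 ≤ ‖x‖ := norm_nonneg x
    nlinarith [mul_nonneg (mul_nonneg hσpos.le hε.le) (mul_nonneg (sub_nonneg.2 hxR.le) h0)]
  calc |ρ x| ≤ M * Real.exp (a * (‖x‖^2 - R^2)) := habs
    _ ≤ M * Real.exp (-σ * (R - ‖x‖) / ε) := mul_le_mul_of_nonneg_left hexp hM0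
    _ ≤ 2 * M * Real.exp (-σ * (R - ‖x‖) / ε) := by
        nlinarith [Real.exp_pos (-σ * (R - ‖x‖) / ε), hM0]
end
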